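/- Let ε'_j = ε_j + ε_2·δ_{j,1} + ε_1·δ_{j,2} for j = 1,...,d (so ε'_1 = ε'_2 = ε_1 + ε_2 and ε'_j = ε_j for j ≥ 3), and let ε* be the second smallest value among ε'_1,...,ε'_d. If X = (μ_1+ε_1+ε_2, μ_2+ε_1+ε_2, ε_3,...,ε_d) and X' is defined by X'_i = μ_i·[i≤2] + min(ε*, ε'_i), then d_tr(X, X') = max_{1≤i≤d}(ε'_i) - ε*, and if the ε_j are i.i.d. N(0,σ), then E[d_tr(X,X')] ≤ 4σ√(2 log d). -/

import Mathlib

open MeasureTheory ProbabilityTheory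

/-- The tropical (generalized Hilbert projective) distance on `ℝ^d`. -/
noncomputable def dtr {d : ℕ} [NeZero d] (v w : Fin d → ℝ) : ℝ :=
  Finset.univ.sup' Finset.univ_nonempty (fun i => v i - w i) -
  Finset.univ.inf' Finset.univ_nonempty (fun i => v i - w i)

/-- `m i = μ₁·[i=1] + μ₂·[i=2]` (0-indexed): the mean vector `(μ₁,μ₂,0,…,0)`. -/
noncomputable def meanVec {d : ℕ} (μ₁ μ₂ : ℝ) : Fin d → ℝ := fun i =>
  if (i : ℕ) = 0 then μ₁ else if (i : ℕ) = 1 then μ₂ else 0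

/-- `ε'_j = ε_j + ε₂·δ_{j,1} + ε₁·δ_{j,2}` (0-indexed). -/
noncomputable def epsCor {d : ℕ} [NeZero d] (ε : Fin d → ℝ) : Fin d → ℝ := fun j =>
  ε j + (if j = 0 then ε 1 else 0) + (if j = 1 then ε 0 else 0)

/-- The second smallest value among `ε₁,…,ε_d`, expressed as
`min_{i<j} max(ε_i, ε_j)`. -/
noncomputable def secondMin {d : ℕ}
    (hne : (Finset.univ.filter (fun p : Fin d × Fin d => p.1 < p.2)).Nonempty)
    (ε : Fin d → ℝ) : ℝ :=
  (Finset.univ.filter (fun p : Fin d × Fin d => p.1 < p.2)).inf' hne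
    (fun p => max (ε p.1) (ε p.2))

section aux

variable {Ω : Type*} [MeasurableSpace Ω] {μ : Measure Ω}

lemma aux_integrable_sup' {ι : Type*} {s : Finset ι} (hs : s.Nonempty) {Y : ι → Ω → ℝ}
    (h : ∀ i ∈ s, Integrable (Y i) μ) :
    Integrable (fun ω => s.sup' hs (fun i => Y i ω)) μ := by
  induction hs using Finset.Nonempty.cons_induction with
  | singleton a =>
      simp only [Finset.sup'_singleton]
      exact h a (Finset.mem_singleton_self a)
  | cons a s ha hs ih =>
      simp only [Finset.sup'_cons hs]
      exact (h a (by simp)).sup (ih fun i hi => h i (Finset.mem_cons_of_mem hi))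

lemma aux_integrable_inf' {ι : Type*} {s : Finset ι} (hs : s.Nonempty) {Y : ι → Ω → ℝ}
    (h : ∀ i ∈ s, Integrable (Y i) μ) :
    Integrable (fun ω => s.inf' hs (fun i => Y i ω)) μ := by
  induction hs using Finset.Nonempty.cons_induction with
  | singleton a =>
      simp only [Finset.inf'_singleton]
      exact h a (Finset.mem_singleton_self a)
  | cons a s ha hs ih =>
      simp only [Finset.inf'_cons hs]
      exact (h a (by simp)).inf (ih fun i hi => h i (Finset.mem_cons_of_mem hi))

lemma aux_sup'_sub {ι : Type*} {s : Finset ι} (hs : s.Nonempty) (f : ι → ℝ) (c : ℝ) :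
    s.sup' hs (fun i => f i - c) = s.sup' hs f - c := by
  obtain ⟨i, hi, hival⟩ := Finset.exists_mem_eq_sup' hs f
  refine le_antisymm (Finset.sup'_le _ _ fun j hj => sub_le_sub_right (Finset.le_sup' f hj) c) ?_
  rw [hival]
  exact Finset.le_sup' (fun i => f i - c) hi

lemma aux_abs_le_exp_add (x : ℝ) : |x| ≤ Real.exp x + Real.exp (-x) := by
  rcases abs_cases x with ⟨h, _⟩ | ⟨h, _⟩ <;> rw [h] <;>
    nlinarith [Real.add_one_le_exp x, Real.add_one_le_exp (-x), Real.exp_pos x, Real.exp_pos (-x)]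

/-- Gaussian maximal inequality: if each `Y i` has mgf bounded by `exp (t²s²/2)`,
then `E[max_i Y i] ≤ s √(2 log d)`. -/
lemma aux_gauss_max [IsProbabilityMeasure μ] {d : ℕ} [NeZero d] (hd : 2 ≤ d)
    {Y : Fin d → Ω → ℝ} {s : ℝ} (hs : 0 < s)
    (hint : ∀ i, Integrable (Y i) μ)
    (hexp : ∀ i t, Integrable (fun ω => Real.exp (t * Y i ω)) μ)
    (hmgf : ∀ i t, ∫ ω, Real.exp (t * Y i ω) ∂μ ≤ Real.exp (t ^ 2 * s ^ 2 / 2)) :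
    ∫ ω, Finset.univ.sup' Finset.univ_nonempty (fun i => Y i ω) ∂μ ≤
      s * Real.sqrt (2 * Real.log d) := by
  have hL : 0 < Real.log d := by
    apply Real.log_pos
    exact_mod_cast lt_of_lt_of_le one_lt_two (by exact_mod_cast hd)
  set L : ℝ := Real.log d with hLdef
  set r : ℝ := Real.sqrt (2 * L) with hrdef
  have hr : 0 < r := Real.sqrt_pos.mpr (by linarith)
  have hr2 : r ^ 2 = 2 * L := Real.sq_sqrt (by linarith)
  set t : ℝ := r / s with htdef
  have ht : 0 < t := div_pos hr hs
  set M : Ω → ℝ := fun ω => Finset.univ.sup' Finset.univ_nonempty (fun i => Y i ω) with hM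
  have hMint : Integrable M μ :=
    aux_integrable_sup' Finset.univ_nonempty fun i _ => hint i
  -- exp (t * M ω) = sup' of exp (t * Y i ω)
  have hexpM : ∀ ω, Real.exp (t * M ω) =
      Finset.univ.sup' Finset.univ_nonempty (fun i => Real.exp (t * Y i ω)) := by
    intro ω
    have hmono : Monotone (fun x : ℝ => Real.exp (t * x)) := fun a b hab => by
      exact Real.exp_le_exp.mpr (mul_le_mul_of_nonneg_left hab ht.le)
    exact Finset.comp_sup'_eq_sup'_comp (α := ℝ) (γ := ℝ) Finset.univ_nonempty
      (fun x => Real.exp (t * x)) (fun x y => hmono.map_max)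
  have hexpMint : Integrable (fun ω => Real.exp (t * M ω)) μ := by
    have := aux_integrable_sup' (μ := μ) Finset.univ_nonempty
      (Y := fun i ω => Real.exp (t * Y i ω)) (fun i _ => hexp i t)
    exact this.congr (Filter.Eventually.of_forall fun ω => (hexpM ω).symm)
  -- Jensen
  have hjensen : Real.exp (t * ∫ ω, M ω ∂μ) ≤ ∫ ω, Real.exp (t * M ω) ∂μ := by
    have hconv : ConvexOn ℝ Set.univ Real.exp := convexOn_exp
    have := hconv.map_integral_le (f := fun ω => t * M ω)
      (Real.continuous_exp.continuousOn) isClosed_univ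
      (Filter.Eventually.of_forall fun _ => Set.mem_univ _)
      (hMint.const_mul t) (by exact hexpMint)
    calc Real.exp (t * ∫ ω, M ω ∂μ) = Real.exp (∫ ω, t * M ω ∂μ) := by
          rw [integral_const_mul]
      _ ≤ ∫ ω, Real.exp (t * M ω) ∂μ := this
  -- sup' ≤ sum
  have hsum : ∫ ω, Real.exp (t * M ω) ∂μ ≤ (d : ℝ) * Real.exp (t ^ 2 * s ^ 2 / 2) := by
    have hle : ∀ ω, Real.exp (t * M ω) ≤ ∑ i : Fin d, Real.exp (t * Y i ω) := by
      intro ω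
      rw [hexpM ω]
      apply Finset.sup'_le
      intro i _
      exact Finset.single_le_sum (f := fun i => Real.exp (t * Y i ω))
        (fun j _ => (Real.exp_pos _).le) (Finset.mem_univ i)
    calc ∫ ω, Real.exp (t * M ω) ∂μ ≤ ∫ ω, ∑ i : Fin d, Real.exp (t * Y i ω) ∂μ := by
          apply integral_mono hexpMint (integrable_finset_sum _ fun i _ => hexp i t) hle
      _ = ∑ i : Fin d, ∫ ω, Real.exp (t * Y i ω) ∂μ :=
          integral_finset_sum _ fun i _ => hexp i t
      _ ≤ ∑ _i : Fin d, Real.exp (t ^ 2 * s ^ 2 / 2) :=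
          Finset.sum_le_sum fun i _ => hmgf i t
      _ = (d : ℝ) * Real.exp (t ^ 2 * s ^ 2 / 2) := by
          simp [Finset.sum_const, mul_comm]
  have hdpos : (0 : ℝ) < d := by positivity
  have key : Real.exp (t * ∫ ω, M ω ∂μ) ≤ Real.exp (L + t ^ 2 * s ^ 2 / 2) := by
    have : (d : ℝ) * Real.exp (t ^ 2 * s ^ 2 / 2) = Real.exp (L + t ^ 2 * s ^ 2 / 2) := by
      rw [Real.exp_add, hLdef, Real.exp_log hdpos]
    linarith [hjensen, hsum]
  have h2 : t * ∫ ω, M ω ∂μ ≤ L + t ^ 2 * s ^ 2 / 2 := Real.exp_le_exp.mp key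
  -- conclude: ∫ M ≤ L/t + t s²/2 = s r
  have h4 : (L + t ^ 2 * s ^ 2 / 2) / t = s * r := by
    have hL2 : L = r ^ 2 / 2 := by rw [hr2]; ring
    rw [hL2, htdef]
    field_simp
    ring
  calc ∫ ω, M ω ∂μ ≤ (L + t ^ 2 * s ^ 2 / 2) / t :=
        (le_div_iff₀ ht).mpr (by linarith [h2])
    _ = s * r := h4

end aux

section gauss

open scoped NNReal ENNReal

/-- pointwise: `exp (t x) * pdf₀(x) = exp (t² v / 2) * pdf_{t v}(x)`. -/
lemma aux_pdf_shift {v : ℝ≥0} (hv : v ≠ 0) (t x : ℝ) :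
    Real.exp (t * x) * gaussianPDFReal 0 v x =
      Real.exp (t ^ 2 * v / 2) * gaussianPDFReal (t * v) v x := by
  have hvpos : 0 < v := pos_iff_ne_zero.mpr hv
  have hv0 : (0 : ℝ) < v := by exact_mod_cast hvpos
  unfold gaussianPDFReal
  have h : Real.exp (t * x) * Real.exp (-(x - 0) ^ 2 / (2 * (v : ℝ))) =
      Real.exp (t ^ 2 * (v : ℝ) / 2) * Real.exp (-(x - t * (v : ℝ)) ^ 2 / (2 * (v : ℝ))) := by
    rw [← Real.exp_add, ← Real.exp_add]
    congr 1
    field_simp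
    ring
  rw [mul_left_comm, mul_left_comm (Real.exp (t ^ 2 * (v : ℝ) / 2)), h]

lemma aux_gauss_exp {v : ℝ≥0} (hv : v ≠ 0) (t : ℝ) :
    Integrable (fun x => Real.exp (t * x)) (gaussianReal 0 v) ∧
      ∫ x, Real.exp (t * x) ∂(gaussianReal 0 v) = Real.exp (t ^ 2 * v / 2) := by
  have hpdf : ∀ x, ((gaussianPDFReal 0 v x).toNNReal : ℝ) = gaussianPDFReal 0 v x :=
    fun x => Real.coe_toNNReal _ (gaussianPDFReal_nonneg 0 v x)
  have hmeaspdf : Measurable (fun x => (gaussianPDFReal 0 v x).toNNReal) :=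
    (measurable_gaussianPDFReal 0 v).real_toNNReal
  have hwd : gaussianReal 0 v =
      MeasureTheory.volume.withDensity (fun x => ((gaussianPDFReal 0 v x).toNNReal : ℝ≥0∞)) := by
    rw [gaussianReal_of_var_ne_zero 0 hv]
    rfl
  have hint2 : Integrable (fun x => gaussianPDFReal 0 v x * Real.exp (t * x))
      MeasureTheory.volume := by
    have : (fun x => gaussianPDFReal 0 v x * Real.exp (t * x)) =
        (fun x => Real.exp (t ^ 2 * v / 2) * gaussianPDFReal (t * v) v x) := by
      funext x
      rw [mul_comm (gaussianPDFReal 0 v x), aux_pdf_shift hv]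
    rw [this]
    exact (integrable_gaussianPDFReal (t * v) v).const_mul _
  constructor
  · rw [hwd]
    rw [integrable_withDensity_iff_integrable_smul hmeaspdf]
    refine hint2.congr (Filter.Eventually.of_forall fun x => ?_)
    simp [NNReal.smul_def, hpdf x]
  · rw [hwd, integral_withDensity_eq_integral_smul hmeaspdf]
    have : ∀ x, (gaussianPDFReal 0 v x).toNNReal • Real.exp (t * x) =
        Real.exp (t ^ 2 * v / 2) * gaussianPDFReal (t * v) v x := by
      intro x
      rw [NNReal.smul_def, smul_eq_mul, hpdf x, mul_comm (gaussianPDFReal 0 v x),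
        aux_pdf_shift hv]
    rw [integral_congr_ae (Filter.Eventually.of_forall this), integral_const_mul,
      integral_gaussianPDFReal_eq_one (t * v) hv, mul_one]

end gauss

lemma aux_inf'_sub {ι : Type*} {s : Finset ι} (hs : s.Nonempty) (f : ι → ℝ) (c : ℝ) :
    s.inf' hs (fun i => f i - c) = s.inf' hs f - c := by
  obtain ⟨i, hi, hival⟩ := Finset.exists_mem_eq_inf' hs f
  refine le_antisymm ?_ (Finset.le_inf' _ _ fun j hj => sub_le_sub_right (Finset.inf'_le f hj) c)
  rw [hival]
  exact Finset.inf'_le (fun i => f i - c) hi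

lemma aux_dtr_eq {d : ℕ} [NeZero d]
    (hne : (Finset.univ.filter (fun p : Fin d × Fin d => p.1 < p.2)).Nonempty)
    (m e : Fin d → ℝ) :
    dtr (fun i => m i + e i) (fun i => m i + min (secondMin hne e) (e i)) =
      Finset.univ.sup' Finset.univ_nonempty e - secondMin hne e := by
  set s := secondMin hne e with hs
  obtain ⟨p, hp⟩ := hne
  have hsup : s ≤ Finset.univ.sup' Finset.univ_nonempty e := by
    calc s ≤ max (e p.1) (e p.2) := Finset.inf'_le _ hp
      _ ≤ _ := max_le (Finset.le_sup' e (Finset.mem_univ _))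
          (Finset.le_sup' e (Finset.mem_univ _))
  obtain ⟨q, hq, hqval⟩ := Finset.exists_mem_eq_inf'
    (⟨p, hp⟩ : (Finset.univ.filter (fun p : Fin d × Fin d => p.1 < p.2)).Nonempty)
    (fun p : Fin d × Fin d => max (e p.1) (e p.2))
  have hlow : e q.1 ≤ s := by
    rw [hs]
    exact (le_max_left _ _).trans_eq hqval.symm
  have hpt : ∀ i : Fin d, (m i + e i) - (m i + min s (e i)) = max (e i) s - s := by
    intro i
    rcases le_total (e i) s with h | h
    · rw [min_eq_right h, max_eq_right h]
      ring
    · rw [min_eq_left h, max_eq_left h]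
      ring
  have hsupmax : Finset.univ.sup' Finset.univ_nonempty (fun i => max (e i) s) =
      Finset.univ.sup' Finset.univ_nonempty e := by
    refine le_antisymm (Finset.sup'_le _ _ fun i _ => ?_) (Finset.sup'_le _ _ fun i _ => ?_)
    · exact max_le ((Finset.le_sup' e (Finset.mem_univ i)))
        hsup
    · exact le_trans (le_max_left (e i) s)
        (Finset.le_sup' (fun i => max (e i) s) (Finset.mem_univ i))
  have hinfmax : Finset.univ.inf' Finset.univ_nonempty (fun i => max (e i) s) = s := by
    refine le_antisymm ?_ (Finset.le_inf' _ _ fun i _ => le_max_right _ _)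
    calc Finset.univ.inf' Finset.univ_nonempty (fun i => max (e i) s) ≤ max (e q.1) s :=
          Finset.inf'_le _ (Finset.mem_univ q.1)
      _ = s := max_eq_right hlow
  unfold dtr
  have h1 : (fun i : Fin d => (m i + e i) - (m i + min s (e i))) =
      fun i => max (e i) s - s := funext hpt
  simp only [h1]
  rw [aux_sup'_sub, aux_inf'_sub, hsupmax, hinfmax]
  ring

/-- For `X = (μ₁+ε₁+ε₂, μ₂+ε₁+ε₂, ε₃,…,ε_d)` and
`X'_i = μ_i·[i≤2] + min(ε*, ε'_i)` with `ε'` as in `epsCor` and `ε*` the second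
smallest of the `ε'_j`, we have `d_tr(X,X') = max_i ε'_i - ε*`; and if the `ε_j`
are i.i.d. `N(0,σ²)`, then `E[d_tr(X,X')] ≤ 4σ√(2 log d)`. -/
theorem stmt19 {Ω : Type*} [MeasurableSpace Ω] (μ : Measure Ω) [IsProbabilityMeasure μ]
    {d : ℕ} [NeZero d] (hd : 2 ≤ d) (σ : ℝ) (hσ : 0 < σ) (μ₁ μ₂ : ℝ)
    (ε : Fin d → Ω → ℝ) (hmeas : ∀ i, Measurable (ε i))
    (hindep : iIndepFun ε μ)
    (hdist : ∀ i, Measure.map (ε i) μ = gaussianReal 0 ((σ ^ 2).toNNReal))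
    (hne : (Finset.univ.filter (fun p : Fin d × Fin d => p.1 < p.2)).Nonempty) :
    (∀ ω : Ω,
      dtr (fun i => meanVec μ₁ μ₂ i + epsCor (fun j => ε j ω) i)
          (fun i => meanVec μ₁ μ₂ i +
            min (secondMin hne (epsCor (fun j => ε j ω))) (epsCor (fun j => ε j ω) i)) =
        Finset.univ.sup' Finset.univ_nonempty (epsCor (fun j => ε j ω)) -
          secondMin hne (epsCor (fun j => ε j ω))) ∧
    (∫ ω, dtr (fun i => meanVec μ₁ μ₂ i + epsCor (fun j => ε j ω) i)
          (fun i => meanVec μ₁ μ₂ i +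
            min (secondMin hne (epsCor (fun j => ε j ω))) (epsCor (fun j => ε j ω) i)) ∂μ ≤
      4 * σ * Real.sqrt (2 * Real.log d)) := by
  classical
  set v : NNReal := (σ ^ 2).toNNReal with hv
  have hvne : v ≠ 0 := by
    rw [hv, ne_eq, Real.toNNReal_eq_zero, not_le]
    positivity
  have hvreal : ((v : NNReal) : ℝ) = σ ^ 2 := Real.coe_toNNReal _ (by positivity)
  have hgcont : ∀ t : ℝ, Continuous (fun x : ℝ => Real.exp (t * x)) := fun t =>
    Real.continuous_exp.comp (continuous_const.mul continuous_id)
  -- integrability and mgf of each ε i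
  have hexpi : ∀ (i : Fin d) (t : ℝ), Integrable (fun ω => Real.exp (t * ε i ω)) μ := by
    intro i t
    have h1 := (aux_gauss_exp hvne t).1
    rw [← hdist i] at h1
    exact (integrable_map_measure (hgcont t).aestronglyMeasurable (hmeas i).aemeasurable).mp h1
  have hmgfi : ∀ (i : Fin d) (t : ℝ), ∫ ω, Real.exp (t * ε i ω) ∂μ =
      Real.exp (t ^ 2 * σ ^ 2 / 2) := by
    intro i t
    have h2 := (aux_gauss_exp hvne t).2
    rw [← hdist i, integral_map (hmeas i).aemeasurable (hgcont t).aestronglyMeasurable] at h2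
    rw [h2, hvreal]
  have hinti : ∀ i : Fin d, Integrable (ε i) μ := by
    intro i
    refine Integrable.mono' ((hexpi i 1).add (hexpi i (-1)))
      (hmeas i).aestronglyMeasurable (Filter.Eventually.of_forall fun ω => ?_)
    simpa using aux_abs_le_exp_add (ε i ω)
  -- the correlated noise as a family of random variables
  have h01 : (0 : Fin d) ≠ 1 := by
    intro h
    have h0 : ((0 : Fin d) : ℕ) = 0 := rfl
    have h1 : ((1 : Fin d) : ℕ) = 1 % d := Fin.val_one' d
    have : (0 : ℕ) = 1 % d := by rw [← h0, ← h1, h]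
    rw [Nat.mod_eq_of_lt (lt_of_lt_of_le one_lt_two hd)] at this
    exact absurd this (by norm_num)
  have hEdef : ∀ (i : Fin d) (ω : Ω), epsCor (fun j => ε j ω) i =
      ε i ω + (if i = 0 then ε 1 ω else 0) + (if i = 1 then ε 0 ω else 0) := fun i ω => rfl
  have hE0 : ∀ ω, epsCor (fun j => ε j ω) (0 : Fin d) = ε 0 ω + ε 1 ω := by
    intro ω
    simp [epsCor, h01]
  have hE1 : ∀ ω, epsCor (fun j => ε j ω) (1 : Fin d) = ε 1 ω + ε 0 ω := by
    intro ω
    simp [epsCor, (Ne.symm h01 : (1 : Fin d) ≠ 0)]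
  have hEo : ∀ i : Fin d, i ≠ 0 → i ≠ 1 → ∀ ω, epsCor (fun j => ε j ω) i = ε i ω := by
    intro i hi0 hi1 ω
    simp [epsCor, hi0, hi1]
  have hEint : ∀ i : Fin d, Integrable (fun ω => epsCor (fun j => ε j ω) i) μ := by
    intro i
    have t1 : Integrable (fun ω => if i = 0 then ε 1 ω else 0) μ := by
      rcases eq_or_ne i 0 with h | h
      · simpa [h] using hinti 1
      · simpa [h] using integrable_zero Ω ℝ μ
    have t2 : Integrable (fun ω => if i = 1 then ε 0 ω else 0) μ := by
      rcases eq_or_ne i 1 with h | h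
      · simpa [h] using hinti 0
      · simpa [h] using integrable_zero Ω ℝ μ
    exact ((hinti i).add t1).add t2
  -- mgf bounds for the correlated noise, with subgaussian constant 2σ
  have hmul : ∀ t : ℝ, Integrable (fun ω => Real.exp (t * ε 0 ω) * Real.exp (t * ε 1 ω)) μ ∧
      ∫ ω, Real.exp (t * ε 0 ω) * Real.exp (t * ε 1 ω) ∂μ =
        Real.exp (t ^ 2 * σ ^ 2 / 2) * Real.exp (t ^ 2 * σ ^ 2 / 2) := by
    intro t
    have hcomp : IndepFun (fun ω => Real.exp (t * ε 0 ω)) (fun ω => Real.exp (t * ε 1 ω)) μ :=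
      (hindep.indepFun h01).comp (hgcont t).measurable (hgcont t).measurable
    refine ⟨hcomp.integrable_mul (hexpi 0 t) (hexpi 1 t), ?_⟩
    have h := hcomp.integral_mul_eq_mul_integral (hexpi 0 t).aestronglyMeasurable (hexpi 1 t).aestronglyMeasurable
    calc ∫ ω, Real.exp (t * ε 0 ω) * Real.exp (t * ε 1 ω) ∂μ
        = (∫ ω, Real.exp (t * ε 0 ω) ∂μ) * ∫ ω, Real.exp (t * ε 1 ω) ∂μ := h
      _ = Real.exp (t ^ 2 * σ ^ 2 / 2) * Real.exp (t ^ 2 * σ ^ 2 / 2) := by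
          rw [hmgfi 0 t, hmgfi 1 t]
  have hEexp : ∀ (i : Fin d) (t : ℝ),
      Integrable (fun ω => Real.exp (t * epsCor (fun j => ε j ω) i)) μ := by
    intro i t
    rcases eq_or_ne i 0 with h0 | h0
    · subst h0
      refine ((hmul t).1).congr (Filter.Eventually.of_forall fun ω => ?_)
      simp only [hE0, ← Real.exp_add]
      congr 1
      ring
    rcases eq_or_ne i 1 with h1 | h1
    · subst h1
      refine ((hmul t).1).congr (Filter.Eventually.of_forall fun ω => ?_)
      simp only [hE1, ← Real.exp_add]
      congr 1
      ring
    · refine (hexpi i t).congr (Filter.Eventually.of_forall fun ω => ?_)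
      simp only [hEo i h0 h1]
  have hEmgf : ∀ (i : Fin d) (t : ℝ),
      ∫ ω, Real.exp (t * epsCor (fun j => ε j ω) i) ∂μ ≤
        Real.exp (t ^ 2 * (2 * σ) ^ 2 / 2) := by
    intro i t
    have hkey : t ^ 2 * σ ^ 2 ≤ t ^ 2 * (2 * σ) ^ 2 / 2 := by nlinarith [sq_nonneg t, sq_nonneg σ]
    have hkey2 : t ^ 2 * σ ^ 2 / 2 ≤ t ^ 2 * (2 * σ) ^ 2 / 2 := by
      nlinarith [sq_nonneg t, sq_nonneg σ]
    rcases eq_or_ne i 0 with h0 | h0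
    · subst h0
      have heq : ∫ ω, Real.exp (t * epsCor (fun j => ε j ω) (0 : Fin d)) ∂μ =
          ∫ ω, Real.exp (t * ε 0 ω) * Real.exp (t * ε 1 ω) ∂μ := by
        refine integral_congr_ae (Filter.Eventually.of_forall fun ω => ?_)
        simp only [hE0, ← Real.exp_add]
        congr 1
        ring
      rw [heq, (hmul t).2, ← Real.exp_add]
      exact Real.exp_le_exp.mpr (by linarith)
    rcases eq_or_ne i 1 with h1 | h1
    · subst h1
      have heq : ∫ ω, Real.exp (t * epsCor (fun j => ε j ω) (1 : Fin d)) ∂μ =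
          ∫ ω, Real.exp (t * ε 0 ω) * Real.exp (t * ε 1 ω) ∂μ := by
        refine integral_congr_ae (Filter.Eventually.of_forall fun ω => ?_)
        simp only [hE1, ← Real.exp_add]
        congr 1
        ring
      rw [heq, (hmul t).2, ← Real.exp_add]
      exact Real.exp_le_exp.mpr (by linarith)
    · have heq : ∫ ω, Real.exp (t * epsCor (fun j => ε j ω) i) ∂μ =
          ∫ ω, Real.exp (t * ε i ω) ∂μ := by
        refine integral_congr_ae (Filter.Eventually.of_forall fun ω => ?_)
        simp only [hEo i h0 h1]
      rw [heq, hmgfi i t]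
      exact Real.exp_le_exp.mpr hkey2
  have h2σ : (0 : ℝ) < 2 * σ := by linarith
  -- maximal inequalities for E and -E
  have hmax1 : ∫ ω, Finset.univ.sup' Finset.univ_nonempty
        (fun i => epsCor (fun j => ε j ω) i) ∂μ ≤
      2 * σ * Real.sqrt (2 * Real.log d) :=
    aux_gauss_max hd h2σ hEint hEexp hEmgf
  have hmax2 : ∫ ω, Finset.univ.sup' Finset.univ_nonempty
        (fun i => -epsCor (fun j => ε j ω) i) ∂μ ≤
      2 * σ * Real.sqrt (2 * Real.log d) := by
    refine aux_gauss_max hd h2σ (fun i => (hEint i).neg) (fun i t => ?_) (fun i t => ?_)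
    · refine (hEexp i (-t)).congr (Filter.Eventually.of_forall fun ω => ?_)
      ring_nf
    · have heq : ∫ ω, Real.exp (t * -epsCor (fun j => ε j ω) i) ∂μ =
          ∫ ω, Real.exp ((-t) * epsCor (fun j => ε j ω) i) ∂μ := by
        refine integral_congr_ae (Filter.Eventually.of_forall fun ω => ?_)
        ring_nf
      rw [heq]
      refine le_trans (hEmgf i (-t)) (le_of_eq ?_)
      ring_nf
  -- part 1
  have part1 : ∀ ω : Ω,
      dtr (fun i => meanVec μ₁ μ₂ i + epsCor (fun j => ε j ω) i)
          (fun i => meanVec μ₁ μ₂ i +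
            min (secondMin hne (epsCor (fun j => ε j ω))) (epsCor (fun j => ε j ω) i)) =
        Finset.univ.sup' Finset.univ_nonempty (epsCor (fun j => ε j ω)) -
          secondMin hne (epsCor (fun j => ε j ω)) := fun ω =>
    aux_dtr_eq hne (meanVec μ₁ μ₂) (epsCor (fun j => ε j ω))
  refine ⟨part1, ?_⟩
  -- integrability of the pieces
  have hMint : Integrable
      (fun ω => Finset.univ.sup' Finset.univ_nonempty (epsCor (fun j => ε j ω))) μ :=
    aux_integrable_sup' Finset.univ_nonempty fun i _ => hEint i
  have hSint : Integrable (fun ω => secondMin hne (epsCor (fun j => ε j ω))) μ := by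
    have := aux_integrable_inf' (μ := μ) hne
      (Y := fun (p : Fin d × Fin d) ω =>
        max (epsCor (fun j => ε j ω) p.1) (epsCor (fun j => ε j ω) p.2))
      (fun p _ => (hEint p.1).sup (hEint p.2))
    exact this.congr (Filter.Eventually.of_forall fun ω => rfl)
  have hNint : Integrable
      (fun ω => Finset.univ.sup' Finset.univ_nonempty
        (fun i => -epsCor (fun j => ε j ω) i)) μ :=
    aux_integrable_sup' Finset.univ_nonempty fun i _ => (hEint i).neg
  -- pointwise comparison
  have hptle : ∀ ω : Ω,
      Finset.univ.sup' Finset.univ_nonempty (epsCor (fun j => ε j ω)) -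
          secondMin hne (epsCor (fun j => ε j ω)) ≤
        Finset.univ.sup' Finset.univ_nonempty (epsCor (fun j => ε j ω)) +
          Finset.univ.sup' Finset.univ_nonempty (fun i => -epsCor (fun j => ε j ω) i) := by
    intro ω
    obtain ⟨q, hq, hqval⟩ := Finset.exists_mem_eq_inf' hne
      (fun p : Fin d × Fin d => max (epsCor (fun j => ε j ω) p.1) (epsCor (fun j => ε j ω) p.2))
    have h1 : -secondMin hne (epsCor (fun j => ε j ω)) ≤
        Finset.univ.sup' Finset.univ_nonempty (fun i => -epsCor (fun j => ε j ω) i) := by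
      rw [secondMin, hqval]
      calc -(max (epsCor (fun j => ε j ω) q.1) (epsCor (fun j => ε j ω) q.2)) ≤
            -epsCor (fun j => ε j ω) q.1 := neg_le_neg (le_max_left _ _)
        _ ≤ _ := Finset.le_sup' (fun i => -epsCor (fun j => ε j ω) i) (Finset.mem_univ q.1)
    linarith
  calc ∫ ω, dtr (fun i => meanVec μ₁ μ₂ i + epsCor (fun j => ε j ω) i)
          (fun i => meanVec μ₁ μ₂ i +
            min (secondMin hne (epsCor (fun j => ε j ω))) (epsCor (fun j => ε j ω) i)) ∂μ
      = ∫ ω, (Finset.univ.sup' Finset.univ_nonempty (epsCor (fun j => ε j ω)) -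
          secondMin hne (epsCor (fun j => ε j ω))) ∂μ :=
        integral_congr_ae (Filter.Eventually.of_forall fun ω => part1 ω)
    _ ≤ ∫ ω, (Finset.univ.sup' Finset.univ_nonempty (epsCor (fun j => ε j ω)) +
          Finset.univ.sup' Finset.univ_nonempty (fun i => -epsCor (fun j => ε j ω) i)) ∂μ :=
        integral_mono (hMint.sub hSint) (hMint.add hNint) hptle
    _ = (∫ ω, Finset.univ.sup' Finset.univ_nonempty (epsCor (fun j => ε j ω)) ∂μ) +
          ∫ ω, Finset.univ.sup' Finset.univ_nonempty
            (fun i => -epsCor (fun j => ε j ω) i) ∂μ := integral_add hMint hNint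
    _ ≤ 2 * σ * Real.sqrt (2 * Real.log d) + 2 * σ * Real.sqrt (2 * Real.log d) := by
        have hm1 : (∫ ω, Finset.univ.sup' Finset.univ_nonempty
            (epsCor (fun j => ε j ω)) ∂μ) ≤ 2 * σ * Real.sqrt (2 * Real.log d) := hmax1
        linarith [hmax2]
    _ = 4 * σ * Real.sqrt (2 * Real.log d) := by ring
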